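/- For every positive integer n and every real m with sec(πj/(2n+1))·sin(m) ≠ −1 and the quotient defined for all 0 ≤ j ≤ 2n, ∏_{j=0}^{2n} (1 − 2/(1 + sec(πj/(2n+1))·sin(m)))^{(−1)^j} = − ( sin(m/2 + mn − π/4) / sin(m/2 + mn + π/4) )^{2(−1)^n}. -/

import Mathlib

open Real Finset

private lemma two_sin_eq (θ : ℂ) :
    2 * Complex.sin θ = Complex.I * Complex.exp (-(θ * Complex.I)) *
      (1 - Complex.exp (2 * θ * Complex.I)) := by
  have h1 : Complex.exp (2 * θ * Complex.I)
      = Complex.exp (θ * Complex.I) * Complex.exp (θ * Complex.I) := by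
    rw [← Complex.exp_add]; ring_nf
  have h2 : Complex.exp (-θ * Complex.I) * Complex.exp (θ * Complex.I) = 1 := by
    rw [← Complex.exp_add]
    norm_num
  have h3 : Complex.exp (-(θ * Complex.I)) = Complex.exp (-θ * Complex.I) := by ring_nf
  rw [Complex.sin, h1, h3]
  linear_combination (Complex.I * Complex.exp (θ * Complex.I)) * h2

private lemma prod_z_sub (N : ℕ) (hN : N ≠ 0) (z : ℂ) :
    ∏ k ∈ Finset.range N, (z - Complex.exp (2 * ↑Real.pi * Complex.I / N) ^ k) = z ^ N - 1 := by
  have h := X_pow_sub_C_eq_prod (Complex.isPrimitiveRoot_exp N hN)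
    (Nat.pos_of_ne_zero hN) (one_pow N)
  have h2 := congrArg (Polynomial.eval z) h
  simpa [Polynomial.eval_prod] using h2.symm

private lemma prod_one_sub (N : ℕ) (hN : N ≠ 0) (w : ℂ) (hw : w ≠ 0) :
    ∏ k ∈ Finset.range N, (1 - w * Complex.exp (2 * ↑Real.pi * Complex.I / N) ^ k)
      = 1 - w ^ N := by
  have h := prod_z_sub N hN w⁻¹
  calc ∏ k ∈ Finset.range N, (1 - w * Complex.exp (2 * ↑Real.pi * Complex.I / N) ^ k)
      = ∏ k ∈ Finset.range N, (w * (w⁻¹ - Complex.exp (2 * ↑Real.pi * Complex.I / N) ^ k)) := by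
        refine Finset.prod_congr rfl fun k _ => ?_
        field_simp
    _ = w ^ N * ((w⁻¹) ^ N - 1) := by
        rw [Finset.prod_mul_distrib, Finset.prod_const, Finset.card_range, h]
    _ = 1 - w ^ N := by
        rw [mul_sub, inv_pow, mul_inv_cancel₀ (pow_ne_zero N hw)]; ring

private lemma prod_two_sin_c (n : ℕ) (x : ℂ) :
    ∏ k ∈ Finset.range (2 * n + 1),
        (2 * Complex.sin (x + k * ↑Real.pi / ((2 * n + 1 : ℕ) : ℂ)))
      = 2 * Complex.sin (((2 * n + 1 : ℕ) : ℂ) * x) := by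
  set N : ℕ := 2 * n + 1 with hNdef
  have hN : (N : ℂ) ≠ 0 := Nat.cast_ne_zero.mpr (by omega)
  have hw : Complex.exp (2 * x * Complex.I) ≠ 0 := Complex.exp_ne_zero _
  have step1 : ∀ k ∈ Finset.range N,
      2 * Complex.sin (x + k * ↑Real.pi / N)
        = Complex.I * Complex.exp (-((x + k * ↑Real.pi / N) * Complex.I)) *
          (1 - Complex.exp (2 * x * Complex.I) *
            Complex.exp (2 * ↑Real.pi * Complex.I / N) ^ k) := by
    intro k _
    rw [two_sin_eq]
    congr 2
    rw [← Complex.exp_nat_mul, ← Complex.exp_add]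
    congr 1
    field_simp
  rw [Finset.prod_congr rfl step1, Finset.prod_mul_distrib, Finset.prod_mul_distrib,
    Finset.prod_const, Finset.card_range,
    prod_one_sub N (by omega) _ hw, ← Complex.exp_sum]
  have hsum : ∑ k ∈ Finset.range N, (-((x + k * ↑Real.pi / N) * Complex.I))
      = -((N : ℂ) * x * Complex.I) + (n : ℂ) * (-(↑Real.pi * Complex.I)) := by
    have hid : (∑ k ∈ Finset.range N, (k : ℂ)) = ((N : ℂ) * n) := by
      have h2 : (∑ k ∈ Finset.range N, k) * 2 = N * (N - 1) := Finset.sum_range_id_mul_two N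
      have h4 : N * (N - 1) = (N * n) * 2 := by
        have h5 : N - 1 = 2 * n := by omega
        rw [h5, hNdef]; ring
      have h3 : (∑ k ∈ Finset.range N, k) = N * n := by omega
      rw [← Nat.cast_sum, h3]; push_cast; ring
    rw [Finset.sum_congr rfl (fun k _ => by ring : ∀ k ∈ Finset.range N,
        -((x + (k : ℂ) * ↑Real.pi / (N:ℂ)) * Complex.I) = -(x * Complex.I) + (k : ℂ) * (-(↑Real.pi / (N:ℂ) * Complex.I)))]
    rw [Finset.sum_add_distrib, Finset.sum_const, Finset.card_range, ← Finset.sum_mul, hid,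
      nsmul_eq_mul]
    field_simp
  rw [hsum, Complex.exp_add, Complex.exp_nat_mul]
  have hepi : Complex.exp (-(↑Real.pi * Complex.I)) = -1 := by
    rw [Complex.exp_neg, Complex.exp_pi_mul_I]
    norm_num
  have hIN : Complex.I ^ N = (-1 : ℂ) ^ n * Complex.I := by
    rw [hNdef, pow_succ, pow_mul, Complex.I_sq]
  have hkey := two_sin_eq ((N : ℂ) * x)
  have hxN : Complex.exp (2 * x * Complex.I) ^ N = Complex.exp (2 * ((N:ℂ) * x) * Complex.I) := by
    rw [← Complex.exp_nat_mul]; ring_nf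
  rw [hIN, hepi, hxN, hkey]
  have hsq : ((-1 : ℂ) ^ n) * ((-1 : ℂ) ^ n) = 1 := by
    rw [← pow_add]
    simp [← two_mul, pow_mul]
  linear_combination (Complex.I * Complex.exp (-((N:ℂ) * x * Complex.I)) *
    (1 - Complex.exp (2 * ((N:ℂ) * x) * Complex.I))) * hsq

private lemma prod_two_sin (n : ℕ) (x : ℝ) :
    ∏ k ∈ Finset.range (2 * n + 1),
        (2 * Real.sin (x + k * Real.pi / ((2 * n + 1 : ℕ) : ℝ)))
      = 2 * Real.sin (((2 * n + 1 : ℕ) : ℝ) * x) := by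
  have h := prod_two_sin_c n (x : ℂ)
  apply Complex.ofReal_injective
  push_cast
  convert h using 2 with k hk
  · push_cast
    ring_nf
  · push_cast
    ring_nf

private lemma prod_two_sin_sub (n : ℕ) (x : ℝ) :
    ∏ k ∈ Finset.range (2 * n + 1),
        (2 * Real.sin (x - k * Real.pi / ((2 * n + 1 : ℕ) : ℝ)))
      = 2 * Real.sin (((2 * n + 1 : ℕ) : ℝ) * x) := by
  set N : ℕ := 2 * n + 1 with hNdef
  have hNR : (N : ℝ) ≠ 0 := Nat.cast_ne_zero.mpr (by omega)
  rw [← Finset.prod_range_reflect]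
  have h := prod_two_sin n (x - 2 * n * Real.pi / N)
  rw [← hNdef] at h
  have harg : ∀ k ∈ Finset.range N,
      2 * Real.sin (x - ((N - 1 - k : ℕ) : ℝ) * Real.pi / (N : ℝ))
        = 2 * Real.sin ((x - 2 * n * Real.pi / N) + k * Real.pi / (N : ℝ)) := by
    intro k hk
    rw [Finset.mem_range] at hk
    congr 2
    have hc : ((N - 1 - k : ℕ) : ℝ) = 2 * n - k := by
      have : N - 1 - k = 2 * n - k := by omega
      rw [this, Nat.cast_sub (by omega)]
      push_cast; ring
    rw [hc]
    field_simp
    ring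
  rw [Finset.prod_congr rfl harg, h]
  congr 1
  have : (N : ℝ) * (x - 2 * n * Real.pi / N) = (N : ℝ) * x - n * (2 * Real.pi) := by
    field_simp
  rw [this, Real.sin_periodic.sub_nat_mul_eq]

private lemma prod_two_cos (n : ℕ) (x : ℝ) :
    ∏ k ∈ Finset.range (2 * n + 1),
        (2 * Real.cos (x + k * Real.pi / ((2 * n + 1 : ℕ) : ℝ)))
      = 2 * (-1) ^ n * Real.cos (((2 * n + 1 : ℕ) : ℝ) * x) := by
  set N : ℕ := 2 * n + 1 with hNdef
  have h := prod_two_sin n (x + Real.pi / 2)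
  have harg : ∀ k ∈ Finset.range N,
      2 * Real.sin ((x + Real.pi / 2) + k * Real.pi / (N : ℝ))
        = 2 * Real.cos (x + k * Real.pi / (N : ℝ)) := by
    intro k _
    rw [show (x + Real.pi / 2) + k * Real.pi / (N : ℝ)
        = (x + k * Real.pi / (N : ℝ)) + Real.pi / 2 by ring, Real.sin_add_pi_div_two]
  rw [Finset.prod_congr rfl harg] at h
  rw [h]
  have harg2 : (N : ℝ) * (x + Real.pi / 2) = ((N : ℝ) * x + Real.pi / 2) + n * Real.pi := by
    rw [hNdef]; push_cast; ring
  rw [harg2]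
  have hper : ∀ (y : ℝ) (p : ℕ), Real.sin (y + p * Real.pi) = (-1) ^ p * Real.sin y := by
    intro y p
    induction p with
    | zero => simp
    | succ q ih =>
      have : y + (q + 1 : ℕ) * Real.pi = (y + q * Real.pi) + Real.pi := by push_cast; ring
      rw [this, Real.sin_add_pi, ih]
      push_cast; ring
  rw [hper, Real.sin_add_pi_div_two]
  ring

private lemma prod_two_cos_sub (n : ℕ) (x : ℝ) :
    ∏ k ∈ Finset.range (2 * n + 1),
        (2 * Real.cos (x - k * Real.pi / ((2 * n + 1 : ℕ) : ℝ)))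
      = 2 * (-1) ^ n * Real.cos (((2 * n + 1 : ℕ) : ℝ) * x) := by
  set N : ℕ := 2 * n + 1 with hNdef
  have h := prod_two_sin_sub n (x + Real.pi / 2)
  have harg : ∀ k ∈ Finset.range N,
      2 * Real.sin ((x + Real.pi / 2) - k * Real.pi / (N : ℝ))
        = 2 * Real.cos (x - k * Real.pi / (N : ℝ)) := by
    intro k _
    rw [show (x + Real.pi / 2) - k * Real.pi / (N : ℝ)
        = (x - k * Real.pi / (N : ℝ)) + Real.pi / 2 by ring, Real.sin_add_pi_div_two]
  rw [Finset.prod_congr rfl harg] at h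
  rw [h]
  have harg2 : (N : ℝ) * (x + Real.pi / 2) = ((N : ℝ) * x + Real.pi / 2) + n * Real.pi := by
    rw [hNdef]; push_cast; ring
  rw [harg2]
  have hper : ∀ (y : ℝ) (p : ℕ), Real.sin (y + p * Real.pi) = (-1) ^ p * Real.sin y := by
    intro y p
    induction p with
    | zero => simp
    | succ q ih =>
      have : y + (q + 1 : ℕ) * Real.pi = (y + q * Real.pi) + Real.pi := by push_cast; ring
      rw [this, Real.sin_add_pi, ih]
      push_cast; ring
  rw [hper, Real.sin_add_pi_div_two]
  ring

private lemma num_eval (n : ℕ) (y : ℝ) :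
    ∏ i ∈ Finset.range (2 * n + 1),
        (2 * (Real.cos y - Real.cos (2 * Real.pi * i / ((2 * n + 1 : ℕ) : ℝ))))
      = -(4 * Real.sin (((2 * n + 1 : ℕ) : ℝ) * (y / 2)) ^ 2) := by
  set N : ℕ := 2 * n + 1 with hNdef
  have hfac : ∀ i ∈ Finset.range N,
      2 * (Real.cos y - Real.cos (2 * Real.pi * i / (N : ℝ)))
        = (-1) * ((2 * Real.sin (y / 2 + i * Real.pi / (N : ℝ))) *
            (2 * Real.sin (y / 2 - i * Real.pi / (N : ℝ)))) := by
    intro i _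
    rw [Real.cos_sub_cos]
    have e1 : (y + 2 * Real.pi * i / (N : ℝ)) / 2 = y / 2 + i * Real.pi / (N : ℝ) := by ring
    have e2 : (y - 2 * Real.pi * i / (N : ℝ)) / 2 = y / 2 - i * Real.pi / (N : ℝ) := by ring
    rw [e1, e2]; ring
  rw [Finset.prod_congr rfl hfac, Finset.prod_mul_distrib, Finset.prod_mul_distrib,
    Finset.prod_const, Finset.card_range, prod_two_sin n (y / 2), prod_two_sin_sub n (y / 2)]
  rw [hNdef]
  rw [pow_succ, pow_mul]
  norm_num
  ring

private lemma den_eval (n : ℕ) (y : ℝ) :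
    ∏ i ∈ Finset.range (2 * n + 1),
        (2 * (Real.cos y + Real.cos (2 * Real.pi * i / ((2 * n + 1 : ℕ) : ℝ))))
      = 4 * Real.cos (((2 * n + 1 : ℕ) : ℝ) * (y / 2)) ^ 2 := by
  set N : ℕ := 2 * n + 1 with hNdef
  have hfac : ∀ i ∈ Finset.range N,
      2 * (Real.cos y + Real.cos (2 * Real.pi * i / (N : ℝ)))
        = (2 * Real.cos (y / 2 + i * Real.pi / (N : ℝ))) *
            (2 * Real.cos (y / 2 - i * Real.pi / (N : ℝ))) := by
    intro i _
    rw [Real.cos_add_cos]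
    have e1 : (y + 2 * Real.pi * i / (N : ℝ)) / 2 = y / 2 + i * Real.pi / (N : ℝ) := by ring
    have e2 : (y - 2 * Real.pi * i / (N : ℝ)) / 2 = y / 2 - i * Real.pi / (N : ℝ) := by ring
    rw [e1, e2]; ring
  rw [Finset.prod_congr rfl hfac, Finset.prod_mul_distrib,
    prod_two_cos n (y / 2), prod_two_cos_sub n (y / 2)]
  have : ((-1 : ℝ) ^ n) * ((-1 : ℝ) ^ n) = 1 := by
    rw [← pow_add, ← two_mul, pow_mul]; norm_num
  nlinarith [this]

private lemma reindex (n : ℕ) (h : ℝ → ℝ) :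
    ∏ j ∈ Finset.range (2 * n + 1),
        h (if Even j then Real.cos (Real.pi * j / ((2 * n + 1 : ℕ) : ℝ))
           else -Real.cos (Real.pi * j / ((2 * n + 1 : ℕ) : ℝ)))
      = ∏ i ∈ Finset.range (2 * n + 1),
          h (Real.cos (2 * Real.pi * i / ((2 * n + 1 : ℕ) : ℝ))) := by
  set N : ℕ := 2 * n + 1 with hNdef
  have hNR : (N : ℝ) ≠ 0 := Nat.cast_ne_zero.mpr (by omega)
  refine (Finset.prod_nbij' (fun i => if i ≤ n then 2 * i else 2 * i - N)
    (fun j => if Even j then j / 2 else (j + N) / 2) ?_ ?_ ?_ ?_ ?_).symm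
  · intro i hi
    rw [Finset.mem_range] at hi ⊢
    beta_reduce
    split <;> omega
  · intro j hj
    rw [Finset.mem_range] at hj ⊢
    beta_reduce
    rcases Nat.even_or_odd j with he | ho
    · rw [if_pos he]; omega
    · rw [if_neg (Nat.not_even_iff_odd.mpr ho)]
      rcases ho with ⟨t, ht⟩; omega
  · intro i hi
    rw [Finset.mem_range] at hi
    beta_reduce
    by_cases hc : i ≤ n
    · rw [if_pos hc, if_pos ⟨i, two_mul i⟩]
      omega
    · rw [if_neg hc]
      have hodd : ¬ Even (2 * i - N) := by
        rw [Nat.even_sub (by omega)]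
        simp only [hNdef, Nat.even_iff]
        omega
      rw [if_neg hodd]
      omega
  · intro j hj
    rw [Finset.mem_range] at hj
    beta_reduce
    rcases Nat.even_or_odd j with he | ho
    · obtain ⟨t, ht⟩ := id he
      rw [if_pos he]
      have h2 : j / 2 = t := by omega
      rw [h2, if_pos (by omega)]
      omega
    · rw [if_neg (Nat.not_even_iff_odd.mpr ho)]
      rcases ho with ⟨t, ht⟩
      have h2 : (j + N) / 2 = t + n + 1 := by omega
      rw [h2, if_neg (by omega)]
      omega
  · intro i hi
    rw [Finset.mem_range] at hi
    beta_reduce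
    by_cases hc : i ≤ n
    · rw [if_pos hc, if_pos ⟨i, two_mul i⟩]
      have harg : Real.pi * ((2 * i : ℕ) : ℝ) / (N : ℝ) = 2 * Real.pi * i / (N : ℝ) := by
        push_cast; ring
      rw [harg]
    · rw [if_neg hc]
      have hge : N ≤ 2 * i := by omega
      have hodd : ¬ Even (2 * i - N) := by
        rw [Nat.even_sub hge]
        simp only [hNdef, Nat.even_iff]
        omega
      rw [if_neg hodd]
      have hc2 : ((2 * i - N : ℕ) : ℝ) = 2 * i - N := by
        rw [Nat.cast_sub hge]; push_cast; ring
      have harg : Real.pi * ((2 * i - N : ℕ) : ℝ) / (N : ℝ)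
          = 2 * Real.pi * i / (N : ℝ) - Real.pi := by
        rw [hc2]; field_simp
      rw [harg, Real.cos_sub_pi, neg_neg]

theorem finite_trigonometric_euler_form (n : ℕ) (hn : 0 < n) (m : ℝ)
    (hcos : ∀ j ≤ 2 * n, Real.cos (Real.pi * j / (2 * n + 1)) ≠ 0)
    (hden : ∀ j ≤ 2 * n,
      1 + (Real.cos (Real.pi * j / (2 * n + 1)))⁻¹ * Real.sin m ≠ 0)
    (hsin : Real.sin (m / 2 + m * n + Real.pi / 4) ≠ 0) :
    ∏ j ∈ Finset.range (2 * n + 1),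
      (1 - 2 / (1 + (Real.cos (Real.pi * j / (2 * n + 1)))⁻¹ * Real.sin m)) ^ ((-1 : ℤ) ^ j)
    = -((Real.sin (m / 2 + m * n - Real.pi / 4) /
          Real.sin (m / 2 + m * n + Real.pi / 4)) ^ (2 * (-1 : ℤ) ^ n)) := by
  set N : ℕ := 2 * n + 1 with hNdef
  have hNc : ((N : ℕ) : ℝ) = 2 * (n : ℝ) + 1 := by rw [hNdef]; push_cast; ring
  set s : ℝ := Real.sin m with hsdef
  -- reformulated hypotheses
  have hcos' : ∀ j ≤ 2 * n, Real.cos (Real.pi * j / ((N : ℕ) : ℝ)) ≠ 0 := by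
    intro j hj; rw [hNc]; exact hcos j hj
  have hden' : ∀ j ≤ 2 * n, 1 + (Real.cos (Real.pi * j / ((N : ℕ) : ℝ)))⁻¹ * s ≠ 0 := by
    intro j hj; rw [hNc]; exact hden j hj
  have hsc : ∀ j ≤ 2 * n, s + Real.cos (Real.pi * j / ((N : ℕ) : ℝ)) ≠ 0 := by
    intro j hj h0
    apply hden' j hj
    have hc := hcos' j hj
    have : (1 : ℝ) + (Real.cos (Real.pi * j / ((N : ℕ) : ℝ)))⁻¹ * s
        = (Real.cos (Real.pi * j / ((N : ℕ) : ℝ)) + s) / Real.cos (Real.pi * j / ((N : ℕ) : ℝ)) := by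
      field_simp
    rw [this, show Real.cos (Real.pi * j / ((N : ℕ) : ℝ)) + s = 0 by linarith, zero_div]
  have hsc2 : ∀ j, 1 ≤ j → j ≤ 2 * n → s - Real.cos (Real.pi * j / ((N : ℕ) : ℝ)) ≠ 0 := by
    intro j h1 h2
    have hcast : ((N - j : ℕ) : ℝ) = (N : ℝ) - j := Nat.cast_sub (by omega)
    have harg : Real.pi * ((N - j : ℕ) : ℝ) / ((N : ℕ) : ℝ)
        = Real.pi - Real.pi * j / ((N : ℕ) : ℝ) := by
      have hNR : ((N : ℕ) : ℝ) ≠ 0 := Nat.cast_ne_zero.mpr (by omega)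
      rw [hcast]; field_simp
    have hkey := hsc (N - j) (by omega)
    rw [harg, Real.cos_pi_sub] at hkey
    intro h0; apply hkey; linarith
  -- step 1: pointwise rewriting of the factors
  have hterm : ∀ j ∈ Finset.range N,
      (1 - 2 / (1 + (Real.cos (Real.pi * j / (2 * (n : ℝ) + 1)))⁻¹ * s)) ^ ((-1 : ℤ) ^ j)
        = (s - (if Even j then Real.cos (Real.pi * j / ((N : ℕ) : ℝ))
              else -Real.cos (Real.pi * j / ((N : ℕ) : ℝ))))
          / (s + (if Even j then Real.cos (Real.pi * j / ((N : ℕ) : ℝ))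
              else -Real.cos (Real.pi * j / ((N : ℕ) : ℝ)))) := by
    intro j hj
    rw [Finset.mem_range] at hj
    have hj' : j ≤ 2 * n := by omega
    have hc := hcos' j hj'
    have hd2 := hden' j hj'
    have hd := hsc j hj'
    rw [show (2 * (n : ℝ) + 1) = ((N : ℕ) : ℝ) from hNc.symm]
    have hbase : (1 - 2 / (1 + (Real.cos (Real.pi * j / ((N : ℕ) : ℝ)))⁻¹ * s))
        = (s - Real.cos (Real.pi * j / ((N : ℕ) : ℝ)))
          / (s + Real.cos (Real.pi * j / ((N : ℕ) : ℝ))) := by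
      have hcs : Real.cos (Real.pi * j / ((N : ℕ) : ℝ)) + s ≠ 0 := by
        intro h0; apply hd; linarith
      field_simp
      ring
    rcases Nat.even_or_odd j with he | ho
    · rw [if_pos he, Even.neg_one_pow he, zpow_one, hbase]
    · rw [if_neg (Nat.not_even_iff_odd.mpr ho), Odd.neg_one_pow ho, zpow_neg, zpow_one,
        hbase, inv_div]
      congr 1 <;> ring
  rw [Finset.prod_congr rfl hterm, Finset.prod_div_distrib]
  -- step 2: reindex
  have R1 := reindex n (fun t => s - t)
  have R2 := reindex n (fun t => s + t)
  beta_reduce at R1 R2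
  rw [← hNdef] at R1 R2
  rw [R1, R2]
  -- step 3: evaluation
  have hnum := num_eval n (Real.pi / 2 - m)
  have hden2 := den_eval n (Real.pi / 2 - m)
  rw [Real.cos_pi_div_two_sub, ← hsdef, ← hNdef] at hnum hden2
  have e1 : ∏ i ∈ Finset.range N, (2 * (s - Real.cos (2 * Real.pi * i / ((N : ℕ) : ℝ))))
      = 2 ^ N * ∏ i ∈ Finset.range N, (s - Real.cos (2 * Real.pi * i / ((N : ℕ) : ℝ))) := by
    rw [Finset.prod_mul_distrib, Finset.prod_const, Finset.card_range]
  have e2 : ∏ i ∈ Finset.range N, (2 * (s + Real.cos (2 * Real.pi * i / ((N : ℕ) : ℝ))))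
      = 2 ^ N * ∏ i ∈ Finset.range N, (s + Real.cos (2 * Real.pi * i / ((N : ℕ) : ℝ))) := by
    rw [Finset.prod_mul_distrib, Finset.prod_const, Finset.card_range]
  set A : ℝ := ((N : ℕ) : ℝ) * ((Real.pi / 2 - m) / 2) with hAdef
  have key : (∏ i ∈ Finset.range N, (s - Real.cos (2 * Real.pi * i / ((N : ℕ) : ℝ))))
      / (∏ i ∈ Finset.range N, (s + Real.cos (2 * Real.pi * i / ((N : ℕ) : ℝ))))
      = -(4 * Real.sin A ^ 2) / (4 * Real.cos A ^ 2) := by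
    rw [← mul_div_mul_left _ _ (pow_ne_zero N (two_ne_zero (α := ℝ))), ← e1, ← e2, hnum, hden2]
  rw [key]
  -- cos A ≠ 0
  have hprodden : (∏ i ∈ Finset.range N, (s + Real.cos (2 * Real.pi * i / ((N : ℕ) : ℝ)))) ≠ 0 := by
    rw [← R2]
    rw [Finset.prod_ne_zero_iff]
    intro j hj
    rw [Finset.mem_range] at hj
    rcases Nat.even_or_odd j with he | ho
    · rw [if_pos he]; exact hsc j (by omega)
    · rw [if_neg (Nat.not_even_iff_odd.mpr ho)]
      have h1 : 1 ≤ j := by rcases ho with ⟨t, ht⟩; omega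
      have := hsc2 j h1 (by omega)
      intro h0; apply this; linarith
  have hcA : Real.cos A ≠ 0 := by
    intro h0
    apply hprodden
    have h2 : (2 : ℝ) ^ N * ∏ i ∈ Finset.range N, (s + Real.cos (2 * Real.pi * i / ((N : ℕ) : ℝ)))
        = 4 * Real.cos A ^ 2 := by rw [← e2, hden2]
    rw [h0] at h2
    have h3 : (2 : ℝ) ^ N * (∏ i ∈ Finset.range N, (s + Real.cos (2 * Real.pi * i / ((N : ℕ) : ℝ)))) = 0 := by
      rw [h2]; ring
    rcases mul_eq_zero.mp h3 with hh | hh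
    · exact absurd hh (pow_ne_zero N (two_ne_zero (α := ℝ)))
    · exact hh
  -- step 4: convert to the target form
  have hLHS : -(4 * Real.sin A ^ 2) / (4 * Real.cos A ^ 2) = -(Real.tan A) ^ 2 := by
    rw [Real.tan_eq_sin_div_cos, div_pow]
    field_simp
  rw [hLHS]
  have hcosper : ∀ (y : ℝ) (p : ℕ), Real.cos (y + p * Real.pi) = (-1) ^ p * Real.cos y := by
    intro y p
    induction p with
    | zero => simp
    | succ q ih =>
      have : y + (q + 1 : ℕ) * Real.pi = (y + q * Real.pi) + Real.pi := by push_cast; ring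
      rw [this, Real.cos_add_pi, ih]
      push_cast; ring
  rcases Nat.even_or_odd n with he | ho
  · -- n even
    obtain ⟨p, hp⟩ := id he
    have hA : A = (Real.pi / 4 - (m / 2 + m * n)) + p * Real.pi := by
      rw [hAdef, hNc, hp]; push_cast; ring
    rw [hA, Real.tan_periodic.nat_mul p _, Real.tan_eq_sin_div_cos]
    have hq : Real.sin (Real.pi / 4 - (m / 2 + m * n)) = -Real.sin (m / 2 + m * n - Real.pi / 4) := by
      rw [show Real.pi / 4 - (m / 2 + m * n) = -(m / 2 + m * n - Real.pi / 4) by ring, Real.sin_neg]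
    have hr : Real.cos (Real.pi / 4 - (m / 2 + m * n)) = Real.sin (m / 2 + m * n + Real.pi / 4) := by
      rw [← Real.sin_pi_div_two_sub]; congr 1; ring
    rw [hq, hr, Even.neg_one_pow he]
    rw [show (2 * (1 : ℤ)) = ((2 : ℕ) : ℤ) by norm_num, zpow_natCast]
    all_goals ring
  · -- n odd
    obtain ⟨p, hp⟩ := id ho
    have hA : A = (3 * Real.pi / 4 - (m / 2 + m * n)) + p * Real.pi := by
      rw [hAdef, hNc, hp]; push_cast; ring
    rw [hA, Real.tan_periodic.nat_mul p _, Real.tan_eq_sin_div_cos]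
    have hq : Real.sin (3 * Real.pi / 4 - (m / 2 + m * n)) = Real.sin (m / 2 + m * n + Real.pi / 4) := by
      rw [show 3 * Real.pi / 4 - (m / 2 + m * n) = Real.pi - (m / 2 + m * n + Real.pi / 4) by ring,
        Real.sin_pi_sub]
    have hr : Real.cos (3 * Real.pi / 4 - (m / 2 + m * n)) = Real.sin (m / 2 + m * n - Real.pi / 4) := by
      rw [← Real.sin_pi_div_two_sub]; congr 1; ring
    have hrne : Real.sin (m / 2 + m * n - Real.pi / 4) ≠ 0 := by
      rw [hA, hcosper, hr] at hcA
      intro h0; apply hcA; rw [h0]; ring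
    rw [hq, hr, Odd.neg_one_pow ho]
    rw [show (2 * (-1 : ℤ)) = -((2 : ℕ) : ℤ) by norm_num, zpow_neg, zpow_natCast]
    rw [div_pow, div_pow, inv_div]
    all_goals ring
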